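/- If F is a long-tailed distribution on the positive half-line, then there exists an increasing concave function h with h(x) < x/2 for all large x, h(x) → ∞ as x → ∞, and F̄(x - h(x)) ~ F̄(x) as x → ∞. -/

import Mathlib

open Filter MeasureTheory Set

namespace LongTailedAux

noncomputable def bdSeq (T : ℕ → ℝ) : ℕ → ℝ × ℝ
  | 0 => (max 0 (T 0), max 3 (T 1 - max 0 (T 0)))
  | n+1 => ((bdSeq T n).1 + (bdSeq T n).2,
      max ((bdSeq T n).2 + 1) (T (n+2) - ((bdSeq T n).1 + (bdSeq T n).2)))

noncomputable def bSeq (T : ℕ → ℝ) (n : ℕ) : ℝ := (bdSeq T n).1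
noncomputable def dSeq (T : ℕ → ℝ) (n : ℕ) : ℝ := (bdSeq T n).2

variable (T : ℕ → ℝ)

lemma bSeq_succ (n : ℕ) : bSeq T (n+1) = bSeq T n + dSeq T n := rfl

lemma dSeq_succ_ge (n : ℕ) : dSeq T n + 1 ≤ dSeq T (n+1) := le_max_left _ _

lemma three_le_dSeq : ∀ n, (3:ℝ) ≤ dSeq T n
  | 0 => le_max_left _ _
  | n+1 => le_trans (by linarith [three_le_dSeq n]) (dSeq_succ_ge T n)

lemma dSeq_pos (n : ℕ) : (0:ℝ) < dSeq T n := lt_of_lt_of_le (by norm_num) (three_le_dSeq T n)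

lemma dSeq_mono : Monotone (dSeq T) :=
  monotone_nat_of_le_succ fun n => le_trans (by linarith) (dSeq_succ_ge T n)

lemma bSeq_zero_nonneg : (0:ℝ) ≤ bSeq T 0 := le_max_left _ _

lemma T_le_bSeq : ∀ n, T n ≤ bSeq T n
  | 0 => le_max_right _ _
  | 1 => by
      have : T 1 - max 0 (T 0) ≤ dSeq T 0 := le_max_right _ _
      have h := bSeq_succ T 0
      simp only [bSeq, bdSeq] at *
      linarith
  | n+2 => by
      have h1 : T (n+2) - (bSeq T n + dSeq T n) ≤ dSeq T (n+1) := le_max_right _ _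
      have h2 : bSeq T (n+2) = bSeq T (n+1) + dSeq T (n+1) := rfl
      have h3 : bSeq T (n+1) = bSeq T n + dSeq T n := rfl
      linarith

lemma bSeq_mono : Monotone (bSeq T) :=
  monotone_nat_of_le_succ fun n => by
    have := dSeq_pos T n; rw [bSeq_succ]; linarith

lemma bSeq_lower : ∀ n : ℕ, bSeq T 0 + 3 * n ≤ bSeq T n
  | 0 => by simp
  | n+1 => by
      have h1 := bSeq_lower n
      have h2 := three_le_dSeq T n
      rw [bSeq_succ]; push_cast; linarith

lemma gap_lower : ∀ k n : ℕ, k ≤ n → ((n:ℝ) - k) * dSeq T k ≤ bSeq T n - bSeq T k := by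
  intro k n hkn
  induction n, hkn using Nat.le_induction with
  | base => simp
  | succ n hkn ih =>
      have hd : dSeq T k ≤ dSeq T n := dSeq_mono T hkn
      rw [bSeq_succ]; push_cast; nlinarith [dSeq_pos T k]

lemma gap_upper : ∀ n k : ℕ, n ≤ k → bSeq T k - bSeq T n ≤ ((k:ℝ) - n) * dSeq T k := by
  intro n k hnk
  induction k, hnk using Nat.le_induction with
  | base => simp
  | succ k hnk ih =>
      have hd : dSeq T k ≤ dSeq T (k+1) := dSeq_mono T (Nat.le_succ k)
      have hcast : (n:ℝ) ≤ k := by exact_mod_cast hnk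
      rw [bSeq_succ]; push_cast; nlinarith [dSeq_pos T k]

/-- the affine pieces -/
noncomputable def line (k : ℕ) (x : ℝ) : ℝ := (k:ℝ) + (x - bSeq T k) / dSeq T k

lemma line_ge (n k : ℕ) (x : ℝ) (hx : bSeq T n ≤ x) : (n:ℝ) ≤ line T k x := by
  unfold line
  have hdk := dSeq_pos T k
  rcases le_total k n with hkn | hnk
  · have h1 := gap_lower T k n hkn
    have h2 : ((n:ℝ) - k) ≤ (x - bSeq T k) / dSeq T k := by
      rw [le_div_iff₀ hdk]; linarith
    linarith
  · have h1 := gap_upper T n k hnk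
    have h2 : -((k:ℝ) - n) ≤ (x - bSeq T k) / dSeq T k := by
      rw [le_div_iff₀ hdk]; nlinarith
    linarith

lemma line_bdd (x : ℝ) (k : ℕ) : min 0 ((x - bSeq T 0) / dSeq T 0) ≤ line T k x := by
  unfold line
  have hdk := dSeq_pos T k
  have hd0 := dSeq_pos T 0
  have h1 := gap_upper T 0 k (Nat.zero_le k)
  have h2 : (x - bSeq T 0) / dSeq T k - (k:ℝ) ≤ (x - bSeq T k) / dSeq T k := by
    rw [div_sub' (ne_of_gt hdk), div_le_div_iff₀ hdk hdk]
    push_cast at h1 ⊢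
    nlinarith
  rcases le_total (bSeq T 0) x with hx | hx
  · have : (0:ℝ) ≤ (x - bSeq T 0) / dSeq T k := div_nonneg (by linarith) (le_of_lt hdk)
    calc min 0 ((x - bSeq T 0) / dSeq T 0) ≤ 0 := min_le_left _ _
    _ ≤ (k:ℝ) + (x - bSeq T k) / dSeq T k := by
        have : (0:ℝ) ≤ k := Nat.cast_nonneg k
        linarith
  · have hmono : (x - bSeq T 0) / dSeq T 0 ≤ (x - bSeq T 0) / dSeq T k := by
      rw [div_le_div_iff₀ hd0 hdk]
      have := dSeq_mono T (Nat.zero_le k)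
      nlinarith
    calc min 0 ((x - bSeq T 0) / dSeq T 0) ≤ (x - bSeq T 0) / dSeq T 0 := min_le_right _ _
    _ ≤ (x - bSeq T 0) / dSeq T k := hmono
    _ ≤ (k:ℝ) + (x - bSeq T k) / dSeq T k := by
        have : (0:ℝ) ≤ k := Nat.cast_nonneg k
        linarith

noncomputable def hFun (x : ℝ) : ℝ := ⨅ k : ℕ, line T k x

lemma hFun_bddBelow (x : ℝ) : BddBelow (Set.range fun k => line T k x) :=
  ⟨min 0 ((x - bSeq T 0) / dSeq T 0), by rintro y ⟨k, rfl⟩; exact line_bdd T x k⟩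

lemma hFun_le (k : ℕ) (x : ℝ) : hFun T x ≤ line T k x := ciInf_le (hFun_bddBelow T x) k

lemma hFun_ge (n : ℕ) (x : ℝ) (hx : bSeq T n ≤ x) : (n:ℝ) ≤ hFun T x :=
  le_ciInf fun k => line_ge T n k x hx

lemma hFun_mono : Monotone (hFun T) := by
  intro x y hxy
  apply ciInf_mono (hFun_bddBelow T x)
  intro k
  unfold line
  have := dSeq_pos T k
  have : (x - bSeq T k) / dSeq T k ≤ (y - bSeq T k) / dSeq T k := by
    apply div_le_div_of_nonneg_right ?_ ?_ <;> try linarith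
  linarith

lemma hFun_concave : ConcaveOn ℝ Set.univ (hFun T) := by
  refine ⟨convex_univ, ?_⟩
  intro x _ y _ a c ha hc hac
  apply le_ciInf
  intro k
  have hxk := hFun_le T k x
  have hyk := hFun_le T k y
  have heq : line T k (a • x + c • y) = a * line T k x + c * line T k y := by
    have hc1 : c = 1 - a := by linarith
    subst hc1
    unfold line
    have hd := (dSeq_pos T k).ne'
    field_simp
    ring
  rw [smul_eq_mul, smul_eq_mul, heq]
  have h1 : a * hFun T x ≤ a * line T k x := mul_le_mul_of_nonneg_left hxk ha
  have h2 : c * hFun T y ≤ c * line T k y := mul_le_mul_of_nonneg_left hyk hc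
  linarith

end LongTailedAux

open LongTailedAux

/-- If F is long-tailed, there is an increasing concave function h with h(x) < x/2
for large x, h(x) → ∞, and F̄(x - h(x)) ~ F̄(x). -/
theorem longTailed_exists_h (Fbar : ℝ → ℝ)
    (hpos : ∀ x, 0 < Fbar x) (hanti : Antitone Fbar)
    (hlong : Tendsto (fun x => Fbar (x - 1) / Fbar x) atTop (nhds 1)) :
    ∃ h : ℝ → ℝ, Monotone h ∧ ConcaveOn ℝ Set.univ h ∧
      (∀ᶠ x in atTop, h x < x / 2) ∧
      Tendsto h atTop atTop ∧
      Tendsto (fun x => Fbar (x - h x) / Fbar x) atTop (nhds 1) := by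
  -- Step 1: finite shifts
  have hshift : ∀ m : ℕ, Tendsto (fun x => Fbar (x - m) / Fbar x) atTop (nhds 1) := by
    intro m
    induction m with
    | zero =>
        have : (fun x => Fbar (x - ((0:ℕ):ℝ)) / Fbar x) = fun _ => (1:ℝ) :=
          funext fun x => by simp [div_self (hpos x).ne']
        rw [this]; exact tendsto_const_nhds
    | succ m ih =>
        have hsub : Tendsto (fun x : ℝ => x - (m:ℝ)) atTop atTop :=
          tendsto_atTop_add_const_right atTop (-(m:ℝ)) tendsto_id |>.congr
            (fun x => by simp [sub_eq_add_neg])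
        have h1 : Tendsto (fun x => Fbar (x - m - 1) / Fbar (x - m)) atTop (nhds 1) :=
          hlong.comp hsub
        have h2 := h1.mul ih
        rw [one_mul] at h2
        refine h2.congr fun x => ?_
        have hne : Fbar (x - m) ≠ 0 := (hpos _).ne'
        have hne2 : Fbar x ≠ 0 := (hpos x).ne'
        push_cast
        rw [← sub_sub]
        field_simp
  -- Step 2: thresholds
  have hT : ∀ n : ℕ, ∃ A : ℝ, ∀ x ≥ A, Fbar (x - ((n:ℝ)+1)) / Fbar x ≤ 1 + 1/((n:ℝ)+1) := by
    intro n
    have h1 : (1:ℝ) < 1 + 1/((n:ℝ)+1) := by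
      have : (0:ℝ) < 1/((n:ℝ)+1) := by positivity
      linarith
    have h2 := hshift (n+1)
    have h3 : ∀ᶠ x in atTop, Fbar (x - ((n:ℝ)+1)) / Fbar x ≤ 1 + 1/((n:ℝ)+1) := by
      have := h2.eventually (eventually_le_nhds h1)
      refine this.mono fun x hx => ?_
      push_cast at hx
      exact hx
    exact eventually_atTop.1 h3
  choose T hTspec using hT
  -- the function
  refine ⟨hFun T, hFun_mono T, hFun_concave T, ?_, ?_, ?_⟩
  · -- h x < x / 2 eventually
    filter_upwards [eventually_gt_atTop (0:ℝ)] with x hx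
    have h1 : hFun T x ≤ line T 0 x := hFun_le T 0 x
    have h2 : line T 0 x < x / 2 := by
      unfold line
      have hd0 := dSeq_pos T 0
      have hd3 := three_le_dSeq T 0
      have hb0 := bSeq_zero_nonneg T
      rw [Nat.cast_zero, zero_add, div_lt_div_iff₀ hd0 (by norm_num : (0:ℝ) < 2)]
      nlinarith
    linarith
  · -- h → atTop
    rw [tendsto_atTop]
    intro C
    filter_upwards [eventually_ge_atTop (bSeq T ⌈C⌉₊)] with x hx
    calc C ≤ (⌈C⌉₊ : ℝ) := Nat.le_ceil C
    _ ≤ hFun T x := hFun_ge T _ x hx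
  · -- the ratio limit
    rw [Metric.tendsto_nhds]
    intro ε hε
    obtain ⟨n, hn⟩ := exists_nat_one_div_lt hε
    filter_upwards [eventually_ge_atTop (bSeq T n)] with x hx
    -- find m with bSeq T m ≤ x < bSeq T (m+1), m ≥ n
    have hbig : ∃ j, x < bSeq T j := by
      obtain ⟨j, hj⟩ := exists_nat_gt ((x - bSeq T 0) / 3)
      refine ⟨j, ?_⟩
      have := bSeq_lower T j
      have h3 : x - bSeq T 0 < 3 * j := by
        rw [div_lt_iff₀ (by norm_num : (0:ℝ) < 3)] at hj; linarith
      linarith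
    classical
    set j0 := Nat.find hbig with hj0
    have hj0pos : n < j0 := by
      by_contra hcon
      push_neg at hcon
      have := Nat.find_spec hbig
      have hmono := bSeq_mono T hcon
      rw [← hj0] at this
      linarith
    obtain ⟨m, hm⟩ : ∃ m, j0 = m + 1 := ⟨j0 - 1, by omega⟩
    have hnm : n ≤ m := by omega
    have hbm : bSeq T m ≤ x := by
      have := Nat.find_min hbig (show m < j0 by omega)
      push_neg at this
      exact this
    have hbm1 : x < bSeq T (m+1) := by
      have := Nat.find_spec hbig
      rwa [← hj0, hm] at this
    -- bounds on hFun
    have hub : hFun T x ≤ (m:ℝ) + 1 := by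
      refine le_trans (hFun_le T m x) ?_
      unfold line
      have hd := dSeq_pos T m
      have : (x - bSeq T m) / dSeq T m ≤ 1 := by
        rw [div_le_one hd]
        have := bSeq_succ T m
        linarith
      linarith
    have hlb : (0:ℝ) ≤ hFun T x := by
      have h0 : bSeq T 0 ≤ x := le_trans (bSeq_mono T (Nat.zero_le m)) hbm
      simpa using hFun_ge T 0 x h0
    -- ratio bounds
    set f := Fbar (x - hFun T x) / Fbar x with hf
    have hfx := hpos x
    have hge1 : 1 ≤ f := by
      rw [hf, le_div_iff₀ hfx, one_mul]
      exact hanti (by linarith)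
    have hle2 : f ≤ 1 + 1/((m:ℝ)+1) := by
      have hnum : Fbar (x - hFun T x) ≤ Fbar (x - ((m:ℝ)+1)) := hanti (by linarith)
      have hthr : T m ≤ x := le_trans (T_le_bSeq T m) hbm
      have := hTspec m x hthr
      calc f ≤ Fbar (x - ((m:ℝ)+1)) / Fbar x := by
            rw [hf, div_le_div_iff₀ hfx hfx]
            nlinarith
      _ ≤ 1 + 1/((m:ℝ)+1) := this
    have hmn : 1/((m:ℝ)+1) ≤ 1/((n:ℝ)+1) := by
      apply one_div_le_one_div_of_le (by positivity)
      have : (n:ℝ) ≤ m := by exact_mod_cast hnm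
      linarith
    rw [Real.dist_eq, abs_of_nonneg (by linarith)]
    have hn' : 1/((n:ℝ)+1) < ε := by exact_mod_cast hn
    linarith
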